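/- Let 𝕄 ∈ ℝ^{N×N} satisfy 𝕄_{ii} ≥ 0, 𝕄_{ij} ≤ 0 for i ≠ j, and column diagonal dominance 𝕄_{ii} ≥ Σ_{j≠i} |𝕄_{ji}| for all i (an M-matrix structure). Write 𝕄 = 𝔻 − ℝ with 𝔻 its diagonal part and ℝ ≥ 0. Then for every ε > 0, the spectral radius of (ε I + 𝔻)^{-1} ℝ is strictly less than 1. -/

import Mathlib

open Matrix

/-- For a column diagonally dominant M-matrix `𝕄 = 𝔻 − ℝ` (diagonal `𝔻 ≥ 0`,
off-diagonal nonpositive), the spectral radius of `(εI + 𝔻)⁻¹ ℝ` is strictly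
less than `1` for every `ε > 0`: every complex eigenvalue has modulus `< 1`. -/
theorem jacobi_spectral_radius_lt_one (N : ℕ) (M : Matrix (Fin N) (Fin N) ℝ)
    (hdiag : ∀ i, 0 ≤ M i i)
    (hoff : ∀ i j, i ≠ j → M i j ≤ 0)
    (hdom : ∀ i, ∑ j ∈ Finset.univ.filter (fun j => j ≠ i), |M j i| ≤ M i i)
    (ε : ℝ) (hε : 0 < ε) :
    ∀ μ : ℂ,
      μ ∈ spectrum ℂ
        ((((ε • (1 : Matrix (Fin N) (Fin N) ℝ) + Matrix.diagonal fun i => M i i)⁻¹ *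
            (Matrix.diagonal (fun i => M i i) - M)).map (Complex.ofReal))) →
      ‖μ‖ < 1 := by
  intro μ hμ
  set d : Fin N → ℝ := fun i => ε + M i i with hd
  have hdpos : ∀ i, 0 < d i := fun i => by have := hdiag i; simp only [hd]; linarith
  have hdne : ∀ i, (d i : ℂ) ≠ 0 := fun i => by
    exact_mod_cast (hdpos i).ne'
  set R : Matrix (Fin N) (Fin N) ℝ := Matrix.diagonal (fun i => M i i) - M with hR
  set E : Matrix (Fin N) (Fin N) ℂ := Matrix.diagonal (fun i => ((d i : ℂ))⁻¹) with hE
  set Dc : Matrix (Fin N) (Fin N) ℂ := Matrix.diagonal (fun i => (d i : ℂ)) with hDc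
  set Rc : Matrix (Fin N) (Fin N) ℂ := R.map Complex.ofReal with hRc
  -- identify the matrix in the statement
  have hinv : (ε • (1 : Matrix (Fin N) (Fin N) ℝ) + Matrix.diagonal fun i => M i i)⁻¹
      = Matrix.diagonal (fun i => (d i)⁻¹) := by
    rw [smul_one_eq_diagonal, diagonal_add]
    apply Matrix.inv_eq_right_inv
    rw [diagonal_mul_diagonal]
    have : (fun i => (ε + M i i) * (d i)⁻¹) = fun _ => (1 : ℝ) :=
      funext fun i => mul_inv_cancel₀ (hdpos i).ne'
    rw [this, diagonal_one]
  have hA : ((ε • (1 : Matrix (Fin N) (Fin N) ℝ) + Matrix.diagonal fun i => M i i)⁻¹ *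
      (Matrix.diagonal (fun i => M i i) - M)).map Complex.ofReal = E * Rc := by
    rw [hinv]
    ext i j
    simp [Matrix.map_apply, Matrix.diagonal_mul, hE, hRc, Complex.ofReal_mul,
      Complex.ofReal_inv, hR]
  rw [hA] at hμ
  have hED : E * Dc = 1 := by
    rw [hE, hDc, diagonal_mul_diagonal]
    have : (fun i => ((d i : ℂ))⁻¹ * (d i : ℂ)) = fun _ => (1 : ℂ) :=
      funext fun i => inv_mul_cancel₀ (hdne i)
    rw [this, diagonal_one]
  -- determinants of the characteristic matrices of E * Rc and E * Rcᵀ agree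
  have hdet : ∀ z : ℂ, (z • (1 : Matrix (Fin N) (Fin N) ℂ) - E * Rc).det
      = (z • (1 : Matrix (Fin N) (Fin N) ℂ) - E * Rcᵀ).det := by
    intro z
    have h1 : z • (1 : Matrix (Fin N) (Fin N) ℂ) - E * Rcᵀ
        = (z • (1 : Matrix (Fin N) (Fin N) ℂ) - Rc * E)ᵀ := by
      rw [transpose_sub, transpose_smul, transpose_one, transpose_mul, hE, diagonal_transpose]
    have h2 : E * (z • (1 : Matrix (Fin N) (Fin N) ℂ) - Rc * E) * Dc
        = z • (1 : Matrix (Fin N) (Fin N) ℂ) - E * Rc := by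
      rw [mul_sub, sub_mul, mul_smul_comm, mul_one, smul_mul_assoc, hED,
        mul_assoc E (Rc * E) Dc, mul_assoc Rc E Dc, hED, mul_one]
    have h3 := congrArg Matrix.det h2
    rw [det_mul, det_mul] at h3
    have hEDdet : E.det * Dc.det = 1 := by
      rw [← det_mul, hED, det_one]
    calc (z • (1 : Matrix (Fin N) (Fin N) ℂ) - E * Rc).det
        = E.det * (z • (1 : Matrix (Fin N) (Fin N) ℂ) - Rc * E).det * Dc.det := h3.symm
      _ = (E.det * Dc.det) * (z • (1 : Matrix (Fin N) (Fin N) ℂ) - Rc * E).det := by ring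
      _ = (z • (1 : Matrix (Fin N) (Fin N) ℂ) - Rc * E).det := by rw [hEDdet, one_mul]
      _ = (z • (1 : Matrix (Fin N) (Fin N) ℂ) - E * Rcᵀ).det := by rw [h1, det_transpose]
  -- transfer spectrum membership
  have hμ' : μ ∈ spectrum ℂ (E * Rcᵀ) := by
    rw [spectrum.mem_iff] at hμ ⊢
    intro h
    apply hμ
    rw [Matrix.isUnit_iff_isUnit_det] at h ⊢
    rwa [Algebra.algebraMap_eq_smul_one, hdet μ, ← Algebra.algebraMap_eq_smul_one]
  have hev : Module.End.HasEigenvalue (Matrix.toLin' (E * Rcᵀ)) μ := by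
    rw [Module.End.hasEigenvalue_iff_mem_spectrum]
    rwa [show Matrix.toLin' (E * Rcᵀ) = Matrix.toLinAlgEquiv' (E * Rcᵀ) from rfl,
      AlgEquiv.spectrum_eq]
  obtain ⟨k, hk⟩ := eigenvalue_mem_ball hev
  have hentry : ∀ j, (E * Rcᵀ) k j = ((d k : ℂ))⁻¹ * Complex.ofReal (R j k) := by
    intro j
    rw [hE, diagonal_mul]
    rfl
  have hkk : (E * Rcᵀ) k k = 0 := by
    rw [hentry k]
    simp [hR]
  rw [hkk, Metric.mem_closedBall, dist_zero_right] at hk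
  have hsum : ∑ j ∈ Finset.univ.erase k, ‖(E * Rcᵀ) k j‖
      = (d k)⁻¹ * ∑ j ∈ Finset.univ.erase k, |R j k| := by
    rw [Finset.mul_sum]
    refine Finset.sum_congr rfl fun j _ => ?_
    rw [hentry j, norm_mul, norm_inv, Complex.norm_real, Complex.norm_real,
      Real.norm_eq_abs, Real.norm_eq_abs, abs_of_pos (hdpos k)]
  have hsum2 : ∑ j ∈ Finset.univ.erase k, |R j k|
      = ∑ j ∈ Finset.univ.filter (fun j => j ≠ k), |M j k| := by
    rw [← Finset.filter_ne']
    refine Finset.sum_congr rfl fun j hj => ?_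
    rw [Finset.mem_filter] at hj
    rw [hR]
    simp only [Matrix.sub_apply, Matrix.diagonal_apply_ne _ hj.2, zero_sub, abs_neg]
  have hle : ‖μ‖ ≤ (d k)⁻¹ * M k k := by
    refine hk.trans ?_
    rw [hsum, hsum2]
    exact mul_le_mul_of_nonneg_left (hdom k) (inv_nonneg.mpr (hdpos k).le)
  have hlt : (d k)⁻¹ * M k k < 1 := by
    rw [inv_mul_eq_div, div_lt_one (hdpos k)]
    simp only [hd]
    linarith
  calc ‖μ‖ = ‖μ‖ := rfl
    _ ≤ (d k)⁻¹ * M k k := hle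
    _ < 1 := hlt
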